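/- Let a < b be coprime positive integers and n sufficiently large with n ≡ a² (mod a+b). Set L_n = (n+ab)/(2(an+bn+ab)), t1 = 0, t2 = ((a+b)/a)·(1/(a+b) − L_n), and t3 = n·(a+n)(n+ab)/(2an(an+bn+ab)). Then μ_{a,b,n}(t1,t2,t3) = L_n; in particular α(a,b,n) ≥ L_n. -/

import Mathlib

/-- Distance from a real number to the nearest integer. -/
noncomputable def dni (u : ℝ) : ℝ := |u - round u|

/-- Approximation cost of `(t1, t2)` relative to the two-element set `{a, b}`. -/
noncomputable def mu2 (a b : ℕ) (t1 t2 : ℝ) : ℝ :=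
  ⨅ x : ℝ, max (dni (t1 - x * a)) (dni (t2 - x * b))

/-- Approximation cost of `(t1, t2, t3)` relative to the set `{a, b, n}`. -/
noncomputable def mu3 (a b n : ℕ) (t1 t2 t3 : ℝ) : ℝ :=
  ⨅ x : ℝ, max (dni (t1 - x * a)) (max (dni (t2 - x * b)) (dni (t3 - x * n)))

/-- Angular Kronecker constant of `{a, b, n}`. -/
noncomputable def alpha3 (a b n : ℕ) : ℝ :=
  sSup {v : ℝ | ∃ t1 t2 t3 : ℝ, v = mu3 a b n t1 t2 t3}

/-- Binary Kronecker constant of `{a, b, n}`. -/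
noncomputable def beta3 (a b n : ℕ) : ℝ :=
  sSup {v : ℝ | ∃ t1 t2 t3 : ℝ, t1 ∈ ({0, 1/2} : Set ℝ) ∧ t2 ∈ ({0, 1/2} : Set ℝ) ∧
    t3 ∈ ({0, 1/2} : Set ℝ) ∧ v = mu3 a b n t1 t2 t3}

lemma dni_nonneg (u : ℝ) : 0 ≤ dni u := abs_nonneg _
lemma dni_le (u : ℝ) (k : ℤ) : dni u ≤ |u - k| := round_le u k
lemma dni_half (u : ℝ) : dni u ≤ 1/2 := abs_sub_round u

lemma mu3_bddBelow (a b n : ℕ) (t1 t2 t3 : ℝ) :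
    BddBelow (Set.range fun x : ℝ =>
      max (dni (t1 - x * a)) (max (dni (t2 - x * b)) (dni (t3 - x * n)))) := by
  refine ⟨0, ?_⟩
  rintro v ⟨x, rfl⟩
  exact le_trans (dni_nonneg _) (le_max_left _ _)

lemma mu3_le_half (a b n : ℕ) (t1 t2 t3 : ℝ) : mu3 a b n t1 t2 t3 ≤ 1/2 := by
  unfold mu3
  exact ciInf_le_of_le (mu3_bddBelow a b n t1 t2 t3) 0
    (max_le (dni_half _) (max_le (dni_half _) (dni_half _)))

set_option maxHeartbeats 2000000 in
theorem stmt_18 (a b : ℕ) (ha : 0 < a) (hab : a < b) (hcop : Nat.Coprime a b) :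
    ∃ N : ℕ, ∀ n : ℕ, N ≤ n → b < n → n % (a + b) = a ^ 2 % (a + b) →
      mu3 a b n 0
        ((((a : ℝ) + b) / a) * (1 / ((a : ℝ) + b) - ((n : ℝ) + a * b) / (2 * (a * n + b * n + a * b))))
        ((n : ℝ) * (((a : ℝ) + n) * (n + a * b) / (2 * a * n * (a * n + b * n + a * b))))
        = ((n : ℝ) + a * b) / (2 * (a * n + b * n + a * b)) ∧
      alpha3 a b n ≥ ((n : ℝ) + a * b) / (2 * (a * n + b * n + a * b)) := by
  refine ⟨(a + b) ^ 3, fun n hn hbn _hmod => ?_⟩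
  -- basic positivity and size facts
  have hb : 0 < b := ha.trans hab
  have hn0 : 0 < n := lt_trans hb hbn
  have hApos : (0:ℝ) < a := by exact_mod_cast ha
  have hBpos : (0:ℝ) < b := by exact_mod_cast hb
  have hNpos : (0:ℝ) < n := by exact_mod_cast hn0
  have hA1 : (1:ℝ) ≤ a := by exact_mod_cast ha
  have hB1 : (a:ℝ) + 1 ≤ b := by exact_mod_cast hab
  have hn1' : a ^ 2 ≤ n := by
    refine le_trans ?_ hn
    calc a ^ 2 ≤ (a + b) ^ 2 := Nat.pow_le_pow_left (Nat.le_add_right a b) 2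
      _ ≤ (a + b) ^ 3 := Nat.pow_le_pow_right (by omega) (by omega)
  have hn2' : a * b * (a + b) ≤ n := by
    refine le_trans ?_ hn
    calc a * b * (a + b) ≤ (a + b) * (a + b) * (a + b) :=
          Nat.mul_le_mul_right _ (Nat.mul_le_mul (Nat.le_add_right _ _) (Nat.le_add_left _ _))
      _ = (a + b) ^ 3 := by ring
  have hn1 : (a:ℝ) ^ 2 ≤ n := by exact_mod_cast hn1'
  have hn2 : (a:ℝ) * b * ((a:ℝ) + b) ≤ n := by exact_mod_cast hn2'
  have hAne : (a:ℝ) ≠ 0 := hApos.ne'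
  have hNne : (n:ℝ) ≠ 0 := hNpos.ne'
  have hABpos : (0:ℝ) < (a:ℝ) + b := by linarith
  have hABne : (a:ℝ) + (b:ℝ) ≠ 0 := hABpos.ne'
  have hs : (0:ℝ) < (a:ℝ) * n + b * n + a * b := by positivity
  have hsne : (a:ℝ) * n + (b:ℝ) * n + (a:ℝ) * b ≠ 0 := hs.ne'
  set L : ℝ := ((n : ℝ) + a * b) / (2 * (a * n + b * n + a * b)) with hLdef
  set T2 : ℝ := (((a : ℝ) + b) / a) * (1 / ((a : ℝ) + b) - L) with hT2def
  set T3 : ℝ := (n : ℝ) * (((a : ℝ) + n) * (n + a * b) / (2 * a * n * (a * n + b * n + a * b)))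
    with hT3def
  -- key inequalities for L
  have h2sL : L * (2 * ((a:ℝ) * n + b * n + a * b)) = (n:ℝ) + a * b := by
    rw [hLdef]; field_simp
  have hLpos : 0 < L := by rw [hLdef]; positivity
  have hLhalf : L < 1/2 := by
    rw [hLdef, div_lt_iff₀ (by positivity)]
    nlinarith [mul_nonneg (sub_nonneg.2 hA1) hNpos.le, mul_pos hBpos hNpos]
  have hgt : 1 < 2 * ((a:ℝ) + b) * L := by
    have h : ((a:ℝ) * n + b * n + a * b) < ((a:ℝ) + b) * ((n:ℝ) + a * b) := by
      nlinarith [mul_pos hApos hBpos]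
    calc (1:ℝ) < (((a:ℝ) + b) * ((n:ℝ) + a * b)) / ((a:ℝ) * n + b * n + a * b) :=
          (one_lt_div hs).mpr h
      _ = 2 * ((a:ℝ) + b) * L := by rw [hLdef]; field_simp
  have hlt : ((a:ℝ) + b) * L < 1 := by
    have h : ((a:ℝ) + b) * ((n:ℝ) + a * b) < 2 * ((a:ℝ) * n + b * n + a * b) := by
      nlinarith [hn2, mul_pos hApos hBpos, mul_nonneg (by linarith : (0:ℝ) ≤ (a:ℝ) - 1) hNpos.le,
        mul_pos hBpos hNpos]
    calc ((a:ℝ) + b) * L = (((a:ℝ) + b) * ((n:ℝ) + a * b)) / (2 * ((a:ℝ) * n + b * n + a * b)) := by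
          rw [hLdef]; ring
      _ < 1 := (div_lt_one (by positivity)).mpr h
  have haL : 2 * (a:ℝ) * L ≤ 1 := by
    have h : (a:ℝ) * ((n:ℝ) + a * b) ≤ (a:ℝ) * n + b * n + a * b := by
      nlinarith [mul_le_mul_of_nonneg_right hn1 hBpos.le]
    calc 2 * (a:ℝ) * L = ((a:ℝ) * ((n:ℝ) + a * b)) / ((a:ℝ) * n + b * n + a * b) := by
          rw [hLdef]; field_simp
      _ ≤ 1 := (div_le_one hs).mpr h
  -- key algebraic identities
  have hAt2 : (a:ℝ) * T2 = 1 - ((a:ℝ) + b) * L := by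
    rw [hT2def, hLdef]; field_simp
  have hAt3 : (a:ℝ) * T3 = ((n:ℝ) + a) * L := by
    rw [hT3def, hLdef]; field_simp; ring
  have hC : (n:ℝ) * T2 - (b:ℝ) * T3 = ((n:ℝ) + b) * L - b := by
    rw [hT2def, hT3def, hLdef]; field_simp; ring
  -- the main computation
  have hmain : mu3 a b n 0 T2 T3 = L := by
    unfold mu3
    apply le_antisymm
    · -- upper bound: explicit witness x = (T2 - L)/b
      refine le_trans (ciInf_le (mu3_bddBelow a b n 0 T2 T3) ((T2 - L) / b)) ?_
      have e1 : (0:ℝ) - (T2 - L) / b * a = ((2 * a + b) * L - 1) / b := by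
        rw [eq_div_iff hBpos.ne']
        field_simp
        nlinarith [hAt2]
      have e2 : T2 - (T2 - L) / b * b = L := by field_simp; ring
      have e3 : T3 - (T2 - L) / b * n = 1 - L := by
        rw [eq_comm, ← sub_eq_zero]
        field_simp
        nlinarith [hC]
      rw [e1, e2, e3]
      have d1 : dni (((2 * (a:ℝ) + b) * L - 1) / b) ≤ L := by
        refine le_trans (dni_le _ 0) ?_
        rw [Int.cast_zero, sub_zero, abs_le]
        constructor
        · rw [le_div_iff₀ hBpos]; nlinarith
        · rw [div_le_iff₀ hBpos]; nlinarith
      have d2 : dni L ≤ L := by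
        refine le_trans (dni_le _ 0) ?_
        rw [Int.cast_zero, sub_zero, abs_of_nonneg hLpos.le]
      have d3 : dni (1 - L) ≤ L := by
        refine le_trans (dni_le _ 1) ?_
        rw [Int.cast_one, show (1:ℝ) - L - 1 = -L by ring, abs_neg, abs_of_nonneg hLpos.le]
      exact max_le d1 (max_le d2 d3)
    · -- lower bound
      refine le_ciInf fun x => ?_
      by_contra hcon
      push_neg at hcon
      rw [max_lt_iff, max_lt_iff] at hcon
      obtain ⟨c1, c2, c3⟩ := hcon
      set u1 : ℝ := 0 - x * a with hu1
      set u2 : ℝ := T2 - x * b with hu2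
      set u3 : ℝ := T3 - x * n with hu3
      set k1 : ℤ := round u1 with hk1
      set k2 : ℤ := round u2 with hk2
      set k3 : ℤ := round u3 with hk3
      have d1 : |u1 - k1| < L := c1
      have d2 : |u2 - k2| < L := c2
      have d3 : |u3 - k3| < L := c3
      -- step 1: a*k2 = b*k1
      have key1 : |(a:ℝ) * T2 + k1 * b - k2 * a| < ((a:ℝ) + b) * L := by
        have e : (a:ℝ) * T2 + k1 * b - k2 * a
            = (b:ℝ) * ((k1:ℝ) - u1) + (a:ℝ) * (u2 - k2) := by
          rw [hu1, hu2]; push_cast; ring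
        rw [e]
        calc |(b:ℝ) * ((k1:ℝ) - u1) + (a:ℝ) * (u2 - k2)|
            ≤ |(b:ℝ) * ((k1:ℝ) - u1)| + |(a:ℝ) * (u2 - k2)| := abs_add_le _ _
          _ < (b:ℝ) * L + (a:ℝ) * L := by
              refine add_lt_add ?_ ?_
              · rw [abs_mul, abs_of_pos hBpos, abs_sub_comm]
                exact (mul_lt_mul_iff_right₀ hBpos).mpr d1
              · rw [abs_mul, abs_of_pos hApos]
                exact (mul_lt_mul_iff_right₀ hApos).mpr d2
          _ = ((a:ℝ) + b) * L := by ring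
      have hM : (a:ℤ) * k2 - (b:ℤ) * k1 = 0 := by
        set M : ℤ := (a:ℤ) * k2 - (b:ℤ) * k1 with hMdef
        have hMr : ((M:ℤ):ℝ) = (a:ℝ) * k2 - (b:ℝ) * k1 := by rw [hMdef]; push_cast; ring
        have key1' : |1 - ((a:ℝ) + b) * L - (M:ℝ)| < ((a:ℝ) + b) * L := by
          have : 1 - ((a:ℝ) + b) * L - (M:ℝ) = (a:ℝ) * T2 + k1 * b - k2 * a := by
            rw [hMr, hAt2]; ring
          rw [this]; exact key1
        rw [abs_lt] at key1'
        rcases lt_trichotomy M 0 with h | h | h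
        · exfalso
          have hMle : M ≤ -1 := by linarith [Int.lt_iff_add_one_le.mp h]
          have : ((M:ℤ):ℝ) ≤ -1 := by exact_mod_cast hMle
          linarith
        · exact h
        · exfalso
          have : (1:ℝ) ≤ ((M:ℤ):ℝ) := by exact_mod_cast h
          linarith
      have hab' : (a:ℤ) * k2 = (b:ℤ) * k1 := by omega
      have hcopz : IsCoprime (a:ℤ) (b:ℤ) := by
        rw [Int.isCoprime_iff_gcd_eq_one]; exact_mod_cast hcop
      have hdvd : (a:ℤ) ∣ k1 := by
        refine hcopz.dvd_of_dvd_mul_left ?_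
        exact ⟨k2, by linarith [hab']⟩
      obtain ⟨j, hj⟩ := hdvd
      have hk2j : k2 = (b:ℤ) * j := by
        have haz : (a:ℤ) ≠ 0 := by exact_mod_cast ha.ne'
        have : (a:ℤ) * k2 = (a:ℤ) * ((b:ℤ) * j) := by rw [hab', hj]; ring
        exact mul_left_cancel₀ haz this
      -- step 2: m := n*j - k3 ≤ -1
      set m : ℤ := (n:ℤ) * j - k3 with hmdef
      have key2 : |((n:ℝ) + a) * L + (a:ℝ) * (m:ℝ)| < ((n:ℝ) + a) * L := by
        have e : ((n:ℝ) + a) * L + (a:ℝ) * (m:ℝ)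
            = (n:ℝ) * ((k1:ℝ) - u1) + (a:ℝ) * (u3 - k3) := by
          rw [hu1, hu3, ← hAt3, hmdef, hj]; push_cast; ring
        rw [e]
        calc |(n:ℝ) * ((k1:ℝ) - u1) + (a:ℝ) * (u3 - k3)|
            ≤ |(n:ℝ) * ((k1:ℝ) - u1)| + |(a:ℝ) * (u3 - k3)| := abs_add_le _ _
          _ < (n:ℝ) * L + (a:ℝ) * L := by
              refine add_lt_add ?_ ?_
              · rw [abs_mul, abs_of_pos hNpos, abs_sub_comm]
                exact (mul_lt_mul_iff_right₀ hNpos).mpr d1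
              · rw [abs_mul, abs_of_pos hApos]
                exact (mul_lt_mul_iff_right₀ hApos).mpr d3
          _ = ((n:ℝ) + a) * L := by ring
      have hm1 : m ≤ -1 := by
        by_contra hm0
        push_neg at hm0
        have hm0z : (0:ℤ) ≤ m := by linarith [Int.lt_iff_add_one_le.mp hm0]
        have hm0' : (0:ℝ) ≤ (m:ℝ) := by exact_mod_cast hm0z
        have hNApos : 0 < ((n:ℝ) + a) * L := by positivity
        have := le_abs_self (((n:ℝ) + a) * L + (a:ℝ) * (m:ℝ))
        nlinarith [mul_nonneg hApos.le hm0']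
      -- step 3: contradiction
      have key3 : |((n:ℝ) + b) * L - (b:ℝ) * ((m:ℝ) + 1)| < ((n:ℝ) + b) * L := by
        have e : ((n:ℝ) + b) * L - (b:ℝ) * ((m:ℝ) + 1)
            = (n:ℝ) * (u2 - k2) + (b:ℝ) * ((k3:ℝ) - u3) := by
          have e' : (n:ℝ) * (u2 - k2) + (b:ℝ) * ((k3:ℝ) - u3)
              = ((n:ℝ) * T2 - (b:ℝ) * T3) - ((k2:ℝ) * n - (k3:ℝ) * b) := by
            rw [hu2, hu3]; ring
          rw [e', hC, hk2j, hmdef]; push_cast; ring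
        rw [e]
        calc |(n:ℝ) * (u2 - k2) + (b:ℝ) * ((k3:ℝ) - u3)|
            ≤ |(n:ℝ) * (u2 - k2)| + |(b:ℝ) * ((k3:ℝ) - u3)| := abs_add_le _ _
          _ < (n:ℝ) * L + (b:ℝ) * L := by
              refine add_lt_add ?_ ?_
              · rw [abs_mul, abs_of_pos hNpos]
                exact (mul_lt_mul_iff_right₀ hNpos).mpr d2
              · rw [abs_mul, abs_of_pos hBpos, abs_sub_comm]
                exact (mul_lt_mul_iff_right₀ hBpos).mpr d3
          _ = ((n:ℝ) + b) * L := by ring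
      have hm1' : (m:ℝ) + 1 ≤ 0 := by
        have : ((m:ℤ):ℝ) ≤ -1 := by exact_mod_cast hm1
        linarith
      have := le_abs_self (((n:ℝ) + b) * L - (b:ℝ) * ((m:ℝ) + 1))
      nlinarith [mul_nonpos_of_nonneg_of_nonpos hBpos.le hm1']
  refine ⟨hmain, ?_⟩
  have hbddS : BddAbove {v : ℝ | ∃ t1 t2 t3 : ℝ, v = mu3 a b n t1 t2 t3} := by
    refine ⟨1/2, ?_⟩
    rintro v ⟨s1, s2, s3, rfl⟩
    exact mu3_le_half a b n s1 s2 s3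
  have hmem : mu3 a b n 0 T2 T3 ∈ {v : ℝ | ∃ t1 t2 t3 : ℝ, v = mu3 a b n t1 t2 t3} :=
    ⟨0, T2, T3, rfl⟩
  calc L = mu3 a b n 0 T2 T3 := hmain.symm
    _ ≤ alpha3 a b n := le_csSup hbddS hmem
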